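/- If a linear binary constraint system (a family of constraints Π_{i∈S_j} v_i = c_j with c_j ∈ {+1,−1}) admits a solution by 2×2 Hermitian involutions (single-qubit operator observables with pairwise commutation within constraints), then it admits a classical solution over {+1,−1}. -/

import Mathlib

open Matrix

abbrev M2x := Matrix (Fin 2) (Fin 2) ℂ

lemma smul_one_inj {a b : ℂ} (h : a • (1 : M2x) = b • (1 : M2x)) : a = b := by
  have := congrFun (congrFun h 0) 0
  simpa [Matrix.one_apply] using this

lemma one_ne_negone : (1 : M2x) ≠ -1 := by
  intro h
  have := congrFun (congrFun h 0) 0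
  simp [Matrix.one_apply] at this
  norm_num at this

lemma sq_eq (P : M2x) : P * P = P.trace • P - P.det • 1 := by
  ext i j
  fin_cases i <;> fin_cases j <;>
    simp [Matrix.mul_apply, Matrix.trace_fin_two, Matrix.det_fin_two, Fin.sum_univ_two,
      Matrix.one_apply] <;> ring

lemma scalar_of (M : M2x) {lam : ℂ} (h : M = lam • 1) (hM : M * M = 1) : M = 1 ∨ M = -1 := by
  subst h
  have h2 : (lam * lam) • (1 : M2x) = (1 : ℂ) • 1 := by
    simpa [smul_smul] using hM
  have := smul_one_inj h2
  rcases mul_self_eq_one_iff.mp this with h | h <;> subst h <;> simp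

lemma trace_eq_zero (M : M2x) (h1 : M * M = 1) (h2 : M ≠ 1) (h3 : M ≠ -1) : M.trace = 0 := by
  by_contra ht
  have key := sq_eq M
  rw [h1] at key
  have hM : M.trace • M = (1 + M.det) • (1 : M2x) := by
    rw [add_smul, one_smul]
    rw [eq_sub_iff_add_eq] at key
    exact key.symm
  have hMeq : M = (M.trace⁻¹ * (1 + M.det)) • (1 : M2x) := by
    rw [mul_smul, ← hM, smul_smul, inv_mul_cancel₀ ht, one_smul]
  rcases scalar_of M hMeq h1 with h | h <;> tauto

lemma commute_traceless (M N : M2x) (hM : M * M = 1) (hN : N * N = 1)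
    (tM : M.trace = 0) (tN : N.trace = 0) (h : M * N = N * M) : M = N ∨ M = -N := by
  have key := sq_eq (M + N)
  have tMN : (M + N).trace = 0 := by simp [Matrix.trace_add, tM, tN]
  rw [tMN, zero_smul, zero_sub] at key
  have expand : (M + N) * (M + N) = 1 + (M * N + M * N) + 1 := by
    rw [add_mul, mul_add, mul_add, hM, hN, ← h]; abel
  rw [expand] at key
  have hMN : M * N = ((-(M + N).det - 2) / 2) • (1 : M2x) := by
    have h2 : (2 : ℂ) • (M * N) = (-(M + N).det - 2) • (1 : M2x) := by
      have : M * N + M * N = (-(M + N).det) • 1 - 1 - 1 := by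
        linear_combination (norm := module) key
      rw [two_smul, this]
      module
    have := congrArg (fun X => ((2 : ℂ)⁻¹) • X) h2
    simpa [smul_smul, div_eq_inv_mul, mul_comm] using this
  set mu : ℂ := (-(M + N).det - 2) / 2 with hmu
  have hMeq : M = mu • N := by
    calc M = M * (N * N) := by rw [hN, mul_one]
    _ = (M * N) * N := by rw [mul_assoc]
    _ = mu • N := by rw [hMN, smul_mul_assoc, one_mul]
  have hmu2 : mu * mu = 1 := by
    have : (M * N) * (M * N) = 1 := by
      calc (M * N) * (M * N) = M * (N * M) * N := by noncomm_ring
      _ = M * (M * N) * N := by rw [← h]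
      _ = (M * M) * (N * N) := by noncomm_ring
      _ = 1 := by rw [hM, hN, one_mul]
    rw [hMN] at this
    apply smul_one_inj
    simpa [smul_smul] using this
  rcases mul_self_eq_one_iff.mp hmu2 with h' | h' <;> rw [h'] at hMeq
  · left; simpa using hMeq
  · right; simp [hMeq]

noncomputable def msgn (M : M2x) : ℤ :=
  if 0 < (M 0 0).re then 1 else if (M 0 0).re < 0 then -1
  else if 0 < (M 0 1).re then 1 else if (M 0 1).re < 0 then -1
  else if 0 < (M 0 1).im then 1 else -1

lemma msgn_pm (M : M2x) : msgn M = 1 ∨ msgn M = -1 := by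
  unfold msgn; split_ifs <;> simp

lemma msgn_neg (M : M2x)
    (hnz : ¬((M 0 0).re = 0 ∧ (M 0 1).re = 0 ∧ (M 0 1).im = 0)) :
    msgn (-M) = -msgn M := by
  unfold msgn
  simp only [Matrix.neg_apply, Complex.neg_re, Complex.neg_im]
  rcases lt_trichotomy (M 0 0).re 0 with h1 | h1 | h1 <;>
  rcases lt_trichotomy (M 0 1).re 0 with h2 | h2 | h2 <;>
  rcases lt_trichotomy (M 0 1).im 0 with h3 | h3 | h3 <;>
    simp_all <;> (try split_ifs) <;> first | rfl | linarith

lemma nondeg (M : M2x) (hH : M.IsHermitian) (ht : M.trace = 0) (h1 : M * M = 1) :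
    ¬((M 0 0).re = 0 ∧ (M 0 1).re = 0 ∧ (M 0 1).im = 0) := by
  rintro ⟨e1, e2, e3⟩
  have h01 : M 0 1 = 0 := Complex.ext e2 e3
  have h00 : M 0 0 = 0 := by
    have hst := hH.apply 0 0
    have him : (M 0 0).im = 0 := by
      have := congrArg Complex.im hst
      simp at this
      linarith
    exact Complex.ext e1 him
  have h10 : M 1 0 = 0 := by
    have := hH.apply 1 0
    rw [h01] at this
    simpa using this.symm
  have h11 : M 1 1 = 0 := by
    have := Matrix.trace_fin_two M
    rw [ht, h00] at this
    simpa using this.symm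
  have hz : (M * M) 0 0 = (0 : ℂ) := by
    simp [Matrix.mul_apply, Fin.sum_univ_two, h00, h01, h10]
  rw [h1] at hz
  simp [Matrix.one_apply] at hz

lemma prod_pm {α : Type*} (v : α → ℤ) (L : List α) (h : ∀ i ∈ L, v i = 1 ∨ v i = -1) :
    (L.map v).prod = 1 ∨ (L.map v).prod = -1 := by
  induction L with
  | nil => left; simp
  | cons a t ih =>
    rcases h a List.mem_cons_self with ha | ha <;>
    rcases ih (fun i hi => h i (List.mem_cons_of_mem a hi)) with hp | hp <;>
      simp [ha, hp]

lemma list_prod {α : Type*} (A : α → M2x) (v : α → ℤ) (N : M2x) (hN : N * N = 1)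
    (L : List α) (h : ∀ i ∈ L, A i = (v i : ℂ) • 1 ∨ A i = (v i : ℂ) • N) :
    (L.map A).prod = (((L.map v).prod : ℤ) : ℂ) • 1 ∨
    (L.map A).prod = (((L.map v).prod : ℤ) : ℂ) • N := by
  induction L with
  | nil => left; simp
  | cons a t ih =>
    rcases h a List.mem_cons_self with ha | ha <;>
    rcases ih (fun i hi => h i (List.mem_cons_of_mem a hi)) with hp | hp <;>
      rw [List.map_cons, List.prod_cons, List.map_cons, List.prod_cons, ha, hp] <;>
      push_cast <;>
      simp only [smul_mul_assoc, mul_smul_comm, smul_smul, one_mul, mul_one, hN]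
    · left; rw [mul_comm]
    · right; rw [mul_comm]
    · right; rw [mul_comm]
    · left; rw [mul_comm]

/-- If a linear BCS (constraints `Π_{i∈S_j} v_i = c_j`, `c_j ∈ {±1}`) has a solution by
2×2 Hermitian involutions commuting within each constraint, then it has a classical
solution over `{±1}`. -/
theorem stmt14 (nv m : ℕ) (S : Fin m → List (Fin nv)) (c : Fin m → ℤ)
    (hc : ∀ j, c j = 1 ∨ c j = -1)
    (h : ∃ A : Fin nv → Matrix (Fin 2) (Fin 2) ℂ,
      (∀ i, (A i).IsHermitian) ∧ (∀ i, A i * A i = 1) ∧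
      (∀ j, ∀ i ∈ S j, ∀ i' ∈ S j, Commute (A i) (A i')) ∧
      (∀ j, ((S j).map A).prod = (c j : ℂ) • (1 : Matrix (Fin 2) (Fin 2) ℂ))) :
    ∃ v : Fin nv → ℤ, (∀ i, v i = 1 ∨ v i = -1) ∧
      ∀ j, ((S j).map v).prod = c j := by
  classical
  obtain ⟨A, hHerm, hInv, hComm, hProd⟩ := h
  set v : Fin nv → ℤ :=
    fun i => if A i = 1 then 1 else if A i = -1 then -1 else msgn (A i) with hvdef
  have hvpm : ∀ i, v i = 1 ∨ v i = -1 := by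
    intro i
    simp only [hvdef]
    split_ifs
    · exact Or.inl rfl
    · exact Or.inr rfl
    · exact msgn_pm _
  refine ⟨v, hvpm, fun j => ?_⟩
  by_cases hcase : ∀ i ∈ S j, A i = 1 ∨ A i = -1
  · have hsc : ∀ i ∈ S j, A i = (v i : ℂ) • 1 ∨ A i = (v i : ℂ) • (1 : M2x) := by
      intro i hi
      left
      rcases hcase i hi with h1 | h1
      · have : v i = 1 := by simp only [hvdef]; rw [if_pos h1]
        rw [this, h1]; norm_num
      · have hne : A i ≠ 1 := by rw [h1]; exact fun hcon => one_ne_negone hcon.symm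
        have : v i = -1 := by simp only [hvdef]; rw [if_neg hne, if_pos h1]
        rw [this, h1]; push_cast; rw [neg_smul, one_smul]
    have heq := hProd j
    rcases list_prod A v 1 (by simp) (S j) hsc with hp | hp <;>
      rw [hp] at heq <;> exact_mod_cast smul_one_inj heq
  · push_neg at hcase
    obtain ⟨i0, hi0, h1, h2⟩ := hcase
    have t0 : (A i0).trace = 0 := trace_eq_zero _ (hInv i0) h1 h2
    set N : M2x := if msgn (A i0) = 1 then A i0 else -(A i0) with hNdef
    have hNinv : N * N = 1 := by
      rw [hNdef]; split_ifs
      · exact hInv i0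
      · rw [neg_mul_neg]; exact hInv i0
    have hNH : N.IsHermitian := by
      rw [hNdef]; split_ifs
      · exact hHerm i0
      · exact (hHerm i0).neg
    have hNt : N.trace = 0 := by
      rw [hNdef]; split_ifs
      · exact t0
      · simp [t0]
    have hN1 : N ≠ 1 := by
      rw [hNdef]; split_ifs
      · exact h1
      · exact fun hcon => h2 (neg_eq_iff_eq_neg.mp hcon)
    have hNn1 : N ≠ -1 := by
      rw [hNdef]; split_ifs
      · exact h2
      · exact fun hcon => h1 (neg_inj.mp hcon)
    have hNnz := nondeg N hNH hNt hNinv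
    have hsgnN : msgn N = 1 := by
      rw [hNdef]; split_ifs with hs
      · exact hs
      · rcases msgn_pm (A i0) with hh | hh
        · exact absurd hh hs
        · rw [msgn_neg (A i0) (nondeg _ (hHerm i0) t0 (hInv i0)), hh]; norm_num
    have key : ∀ i ∈ S j, A i = (v i : ℂ) • 1 ∨ A i = (v i : ℂ) • N := by
      intro i hi
      by_cases e1 : A i = 1
      · left
        have : v i = 1 := by simp only [hvdef]; rw [if_pos e1]
        rw [this, e1]; norm_num
      by_cases e2 : A i = -1
      · left
        have : v i = -1 := by simp only [hvdef]; rw [if_neg e1, if_pos e2]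
        rw [this, e2]; push_cast; rw [neg_smul, one_smul]
      have ti : (A i).trace = 0 := trace_eq_zero _ (hInv i) e1 e2
      have hcomm : A i * A i0 = A i0 * A i := hComm j i hi i0 hi0
      have hrel := commute_traceless (A i) (A i0) (hInv i) (hInv i0) ti t0 hcomm
      have hvi : v i = msgn (A i) := by simp only [hvdef]; rw [if_neg e1, if_neg e2]
      have hiN : A i = N ∨ A i = -N := by
        rw [hNdef]; split_ifs
        · exact hrel
        · rcases hrel with hh | hh
          · right; rw [hh, neg_neg]
          · left; exact hh
      rcases hiN with hh | hh
      · right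
        have : v i = 1 := by rw [hvi, hh, hsgnN]
        rw [this, hh]; norm_num
      · right
        have : v i = -1 := by rw [hvi, hh, msgn_neg N hNnz, hsgnN]
        rw [this, hh]; push_cast; rw [neg_smul, one_smul]
    have heq := hProd j
    rcases list_prod A v N hNinv (S j) key with hp | hp
    · rw [hp] at heq
      exact_mod_cast smul_one_inj heq
    · exfalso
      rw [hp] at heq
      set w : ℤ := ((S j).map v).prod with hw
      have hwpm := prod_pm v (S j) (fun i _ => hvpm i)
      rw [← hw] at hwpm
      have hwne : ((w : ℤ) : ℂ) ≠ 0 := by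
        rcases hwpm with hh | hh <;> rw [hh] <;> norm_num
      have hNs : N = (((w : ℂ))⁻¹ * ((c j : ℤ) : ℂ)) • 1 := by
        calc N = (w : ℂ)⁻¹ • ((w : ℂ) • N) := by
              rw [smul_smul, inv_mul_cancel₀ hwne, one_smul]
        _ = (w : ℂ)⁻¹ • (((c j : ℤ) : ℂ) • 1) := by rw [heq]
        _ = _ := by rw [smul_smul]
      rcases scalar_of N hNs hNinv with hh | hh
      · exact hN1 hh
      · exact hNn1 hh
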